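/- If 0 ≤ ε < 1 and 0 ≤ x ≤ 1, then 1 − (1 − ε)^x ≤ (1 + ε/(2(1 − ε)))·ε·x. -/
import Mathlib

lemma aux_log_bound (u : ℝ) (hu : 0 < u) (hu1 : u ≤ 1) :
    u - u⁻¹ ≤ 2 * Real.log u := by
  set f : ℝ → ℝ := fun v => v - v⁻¹ - 2 * Real.log v with hf
  have hder : ∀ v : ℝ, 0 < v →
      HasDerivAt f (1 - (-(v ^ 2)⁻¹) - 2 * v⁻¹) v := by
    intro v hv
    have h1 : HasDerivAt (fun v : ℝ => v) 1 v := hasDerivAt_id v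
    have h2 : HasDerivAt (fun v : ℝ => v⁻¹) (-(v ^ 2)⁻¹) v := hasDerivAt_inv hv.ne'
    have h3 : HasDerivAt (fun v : ℝ => 2 * Real.log v) (2 * v⁻¹) v :=
      (Real.hasDerivAt_log hv.ne').const_mul 2
    exact (h1.sub h2).sub h3
  have mono : MonotoneOn f (Set.Icc u 1) := by
    apply monotoneOn_of_deriv_nonneg (convex_Icc u 1)
    · apply ContinuousOn.sub
      · apply ContinuousOn.sub continuousOn_id
        exact ContinuousOn.inv₀ continuousOn_id fun v hv => (lt_of_lt_of_le hu hv.1).ne'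
      · exact continuousOn_const.mul
          (Real.continuousOn_log.mono fun v hv => (lt_of_lt_of_le hu hv.1).ne')
    · intro v hv
      rw [interior_Icc] at hv
      exact (hder v (lt_trans hu hv.1)).differentiableAt.differentiableWithinAt
    · intro v hv
      rw [interior_Icc] at hv
      have hv0 : 0 < v := lt_trans hu hv.1
      rw [(hder v hv0).deriv]
      have h := sq_nonneg (1 - v⁻¹)
      have hv2 : (v ^ 2)⁻¹ = v⁻¹ * v⁻¹ := by
        rw [sq, mul_inv]
      nlinarith [h, hv2]
  have h01 : f u ≤ f 1 := mono (Set.mem_Icc.mpr ⟨le_refl u, hu1⟩)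
    (Set.mem_Icc.mpr ⟨hu1, le_refl 1⟩) hu1
  have : f 1 = 0 := by simp [hf]
  have hfu : f u = u - u⁻¹ - 2 * Real.log u := rfl
  rw [this, hfu] at h01
  linarith

/-- Lemma 13(b): if `0 ≤ ε < 1` and `0 ≤ x ≤ 1`, then
`1 − (1 − ε)^x ≤ (1 + ε/(2(1 − ε)))·ε·x`. -/
theorem stmt2 (ε x : ℝ) (hε0 : 0 ≤ ε) (hε1 : ε < 1)
    (hx0 : 0 ≤ x) (hx1 : x ≤ 1) :
    1 - (1 - ε) ^ x ≤ (1 + ε / (2 * (1 - ε))) * ε * x := by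
  have hu : 0 < 1 - ε := by linarith
  have h1 : (1 : ℝ) + x * Real.log (1 - ε) ≤ (1 - ε) ^ x := by
    rw [Real.rpow_def_of_pos hu, mul_comm (Real.log (1 - ε)) x]
    have := Real.add_one_le_exp (x * Real.log (1 - ε))
    linarith
  have h2 : (1 - ε) - (1 - ε)⁻¹ ≤ 2 * Real.log (1 - ε) :=
    aux_log_bound _ hu (by linarith)
  have hb : -Real.log (1 - ε) ≤ ((1 - ε)⁻¹ - (1 - ε)) / 2 := by linarith
  have h3 : 1 - (1 - ε) ^ x ≤ x * (((1 - ε)⁻¹ - (1 - ε)) / 2) := by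
    have := mul_le_mul_of_nonneg_left hb hx0
    nlinarith
  have heq : x * (((1 - ε)⁻¹ - (1 - ε)) / 2) = (1 + ε / (2 * (1 - ε))) * ε * x := by
    field_simp
    ring
  linarith [heq ▸ h3]
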